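/- For every positive integer k, the kernel of the natural map Q*/(Q*)^k → Q(ζ_k)*/(Q(ζ_k)*)^k induced by the inclusion Q ⊆ Q(ζ_k) is an abelian group annihilated by 2; in particular, if k is odd this kernel is trivial. -/

import Mathlib

open Polynomial

/-- For odd `k`, there is a unit `b` of `ZMod k` with `b - 1` a unit. -/
lemma exists_unit_sub_one_unit (k : ℕ) (hk : 0 < k) (hodd : Odd k) :
    ∃ b c : (ZMod k)ˣ, ((b : (ZMod k)ˣ) : ZMod k) - 1 = (1 : ℕ) * (c : ZMod k) := by
  haveI : NeZero k := ⟨hk.ne'⟩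
  have h2 : Nat.Coprime 2 k := by
    rw [Nat.coprime_two_left]; exact hodd
  have hb : Nat.Coprime (2 + k * 1) k := (Nat.coprime_add_mul_left_left 2 k 1).mpr h2
  have hc : Nat.Coprime (1 + k * 1) k := (Nat.coprime_add_mul_left_left 1 k 1).mpr (Nat.coprime_one_left k)
  refine ⟨ZMod.unitOfCoprime _ hb, ZMod.unitOfCoprime _ hc, ?_⟩
  rw [ZMod.coe_unitOfCoprime, ZMod.coe_unitOfCoprime]
  push_cast [ZMod.natCast_self]
  ring

/-- For every `k > 0`, there are units `b, c` of `ZMod k` with `b - 1 = 2 * c`. -/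
lemma exists_unit_sub_one_two_mul (k : ℕ) (hk : 0 < k) :
    ∃ b c : (ZMod k)ˣ, ((b : (ZMod k)ˣ) : ZMod k) - 1 = (2 : ℕ) * (c : ZMod k) := by
  haveI : NeZero k := ⟨hk.ne'⟩
  set e := k.factorization 2 with he
  set m := k / 2 ^ e with hm
  have hkem : 2 ^ e * m = k := Nat.ordProj_mul_ordCompl_eq_self k 2
  have hm2 : Nat.Coprime 2 m := Nat.coprime_ordCompl Nat.prime_two hk.ne'
  have hm4 : Nat.Coprime 4 m := by
    have := Nat.Coprime.pow_left 2 hm2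
    simpa [pow_two] using this
  obtain ⟨N, hN4, hNm⟩ := Nat.chineseRemainder hm4 3 2
  have hN4' : N % 4 = 3 := by
    have := hN4; unfold Nat.ModEq at this; omega
  obtain ⟨t, ht⟩ : ∃ t, N = 4 * t + 3 := ⟨N / 4, by omega⟩
  set c0 := 2 * t + 1 with hc0
  have hNc0 : N = 2 * c0 + 1 := by omega
  -- N ≡ 2 [MOD m]
  have hmdvd : ∃ s, N = m * s + 2 := by
    have h := (Nat.modEq_iff_dvd' (by omega : 2 ≤ N)).mp hNm.symm
    obtain ⟨s, hs⟩ := h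
    exact ⟨s, by omega⟩
  obtain ⟨s, hs⟩ := hmdvd
  have hNodd : Nat.Coprime N 2 := by
    have : N % 2 = 1 := by omega
    simp [Nat.coprime_two_right, Nat.odd_iff, this]
  have hNm' : Nat.Coprime N m := by
    rw [hs, Nat.coprime_comm]
    have : Nat.Coprime (2 + m * s) m := (Nat.coprime_add_mul_left_left 2 m s).mpr hm2
    simpa [Nat.coprime_comm, add_comm] using this
  have hNk : Nat.Coprime N k := by
    rw [← hkem]
    exact Nat.Coprime.mul_right (Nat.Coprime.pow_right e hNodd) hNm'
  have hc0odd : Nat.Coprime c0 2 := by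
    have : c0 % 2 = 1 := by omega
    simp [Nat.coprime_two_right, Nat.odd_iff, this]
  have h2c0m : Nat.Coprime (2 * c0) m := by
    have h1 : 2 * c0 = m * s + 1 := by omega
    rw [h1]
    have : Nat.Coprime (1 + m * s) m := (Nat.coprime_add_mul_left_left 1 m s).mpr (Nat.coprime_one_left m)
    simpa [add_comm] using this
  have hc0m : Nat.Coprime c0 m := Nat.Coprime.coprime_dvd_left (dvd_mul_left c0 2) h2c0m
  have hc0k : Nat.Coprime c0 k := by
    rw [← hkem]
    exact Nat.Coprime.mul_right (Nat.Coprime.pow_right e hc0odd) hc0m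
  refine ⟨ZMod.unitOfCoprime _ hNk, ZMod.unitOfCoprime _ hc0k, ?_⟩
  rw [ZMod.coe_unitOfCoprime, ZMod.coe_unitOfCoprime, hNc0]
  push_cast
  ring


set_option maxHeartbeats 1000000
set_option synthInstance.maxHeartbeats 100000

lemma kernel_aux (k : ℕ) (hk : 0 < k) (ζ : ℂ) (hζ : IsPrimitiveRoot ζ k) (m : ℕ)
    (hbc : ∃ b c : (ZMod k)ˣ, ((b : (ZMod k)ˣ) : ZMod k) - 1 = (m : ℕ) * (c : ZMod k))
    (x : ℚ) (hx : x ≠ 0)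
    (hy : ∃ y : ℂ, y ∈ IntermediateField.adjoin ℚ ({ζ} : Set ℂ) ∧ y ^ k = (x : ℂ)) :
    ∃ z : ℚ, z ≠ 0 ∧ z ^ k = x ^ m := by
  obtain ⟨b, c, hbc⟩ := hbc
  obtain ⟨y, hyK, hyk⟩ := hy
  haveI : NeZero k := ⟨hk.ne'⟩
  set K := IntermediateField.adjoin ℚ ({ζ} : Set ℂ) with hKdef
  -- K is a cyclotomic extension of ℚ
  have hint : IsIntegral ℚ ζ :=
    ⟨X ^ k - C 1, monic_X_pow_sub_C 1 hk.ne', by simp [hζ.pow_eq_one]⟩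
  have Hsub : K.toSubalgebra = Algebra.adjoin ℚ ({ζ} : Set ℂ) :=
    IntermediateField.adjoin_simple_toSubalgebra_of_isAlgebraic hint.isAlgebraic
  haveI hcyc : IsCyclotomicExtension {k} ℚ K := by
    refine IsCyclotomicExtension.equiv {k} ℚ _ (h := ?_)
      (AlgEquiv.refl : K.toSubalgebra ≃ₐ[ℚ] _)
    rw [Hsub]
    exact IsPrimitiveRoot.adjoin_isCyclotomicExtension (n := k) ℚ hζ
  haveI : FiniteDimensional ℚ K := IsCyclotomicExtension.finiteDimensional {k} ℚ K
  haveI : IsGalois ℚ K := IsCyclotomicExtension.isGalois {k} ℚ K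
  set ζK : K := ⟨ζ, IntermediateField.mem_adjoin_simple_self ℚ ζ⟩ with hζKdef
  have hζK : IsPrimitiveRoot ζK k := by
    rw [← IsPrimitiveRoot.coe_submonoidClass_iff]; exact hζ
  -- basic facts
  have hy0 : y ≠ 0 := by
    intro h
    apply hx
    have h0 : ((0:ℂ)) ^ k = (x:ℂ) := by rw [← h]; exact hyk
    rw [zero_pow hk.ne'] at h0
    exact_mod_cast h0.symm
  set Y : K := ⟨y, hyK⟩ with hYdef
  have hY0 : Y ≠ 0 := by
    intro h
    exact hy0 (by rw [show y = (Y : ℂ) from rfl, h]; rfl)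
  have hYx : Y ^ k = algebraMap ℚ K x := by
    apply Subtype.ext
    push_cast
    rw [hyk]
    rfl
  have hζK0 : ζK ≠ 0 := by
    intro h
    exact hζ.ne_zero hk.ne' (by rw [show ζ = (ζK : ℂ) from rfl, h]; rfl)
  -- power congruence lemmas
  have hpow : ∀ i j : ℕ, ζ ^ i = ζ ^ j ↔ (i : ZMod k) = (j : ZMod k) := by
    intro i j
    have hred : ∀ i : ℕ, ζ ^ i = ζ ^ (i % k) := by
      intro i
      conv_lhs => rw [← Nat.div_add_mod i k]
      rw [pow_add, pow_mul, hζ.pow_eq_one, one_pow, one_mul]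
    rw [ZMod.natCast_eq_natCast_iff]
    unfold Nat.ModEq
    constructor
    · intro h
      rw [hred i, hred j] at h
      exact hζ.pow_inj (Nat.mod_lt _ hk) (Nat.mod_lt _ hk) h
    · intro h; rw [hred i, hred j, h]
  have hpowK : ∀ i j : ℕ, ζK ^ i = ζK ^ j ↔ (i : ZMod k) = (j : ZMod k) := by
    intro i j
    rw [← hpow i j]
    constructor
    · intro h
      have := congrArg (Subtype.val) h
      push_cast at this
      exact this
    · intro h; exact Subtype.ext (by push_cast; exact h)
  -- the cocycle exponents
  have hfex : ∀ σ : K ≃ₐ[ℚ] K, ∃ i : ℕ, σ Y = ζK ^ i * Y := by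
    intro σ
    have h1 : (σ Y) ^ k = Y ^ k := by
      rw [← map_pow, hYx, AlgEquiv.commutes]
    have h2 : ((σ Y : K) : ℂ) ^ k = y ^ k := by
      have := congrArg (Subtype.val) h1
      push_cast at this
      exact this
    have h3 : (((σ Y : K) : ℂ) / y) ^ k = 1 := by
      rw [div_pow, h2, div_self (pow_ne_zero _ hy0)]
    obtain ⟨i, _, hi⟩ := hζ.eq_pow_of_pow_eq_one h3
    refine ⟨i, Subtype.ext ?_⟩
    push_cast
    rw [hi]
    field_simp
    rfl
  choose f hf using hfex
  set a : (K ≃ₐ[ℚ] K) → ℕ := fun σ => ((hζK.autToPow ℚ σ : (ZMod k)ˣ) : ZMod k).val with hadef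
  have ha : ∀ σ, σ ζK = ζK ^ a σ := fun σ => (hζK.autToPow_spec ℚ σ).symm
  have haA : ∀ σ, ((a σ : ℕ) : ZMod k) = ((hζK.autToPow ℚ σ : (ZMod k)ˣ) : ZMod k) :=
    fun σ => ZMod.natCast_rightInverse _
  -- commutativity
  have hinj : Function.Injective (hζK.autToPow ℚ) :=
    IsPrimitiveRoot.autToPow_injective (n := k) (hμ := hζK) ℚ
  have hcomm : ∀ σ τ : K ≃ₐ[ℚ] K, σ * τ = τ * σ := fun σ τ =>
    hinj (by rw [map_mul, map_mul, mul_comm])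
  have hmulexp : ∀ σ τ : K ≃ₐ[ℚ] K,
      ((f (σ * τ) : ZMod k)) = (a σ : ZMod k) * (f τ : ZMod k) + (f σ : ZMod k) := by
    intro σ τ
    have h1 : (σ * τ) Y = ζK ^ (a σ * f τ + f σ) * Y := by
      rw [AlgEquiv.mul_apply, hf τ, map_mul, map_pow, hf σ, ha σ]
      rw [← pow_mul, pow_add]
      ring
    have h3 : ζK ^ (f (σ * τ)) = ζK ^ (a σ * f τ + f σ) :=
      mul_right_cancel₀ hY0 ((hf (σ * τ)).symm.trans h1)
    have h4 := (hpowK _ _).mp h3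
    push_cast at h4 ⊢
    exact h4
  have key : ∀ σ τ : K ≃ₐ[ℚ] K,
      ((a σ : ZMod k) - 1) * (f τ : ZMod k) = ((a τ : ZMod k) - 1) * (f σ : ZMod k) := by
    intro σ τ
    have h1 := hmulexp σ τ
    have h2 := hmulexp τ σ
    rw [hcomm σ τ] at h1
    linear_combination h2 - h1
  -- surjectivity of autToPow
  have hsurj : Function.Surjective (hζK.autToPow ℚ) := by
    have e := (IsCyclotomicExtension.autEquivPow K
      (n := k) (Polynomial.cyclotomic.irreducible_rat hk)).toEquiv
    exact ((Fintype.bijective_iff_injective_and_card _).mpr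
      ⟨hinj, Fintype.card_congr e⟩).surjective
  obtain ⟨σb, hσb⟩ := hsurj b
  set J : ZMod k := -(((c⁻¹ : (ZMod k)ˣ) : ZMod k) * (f σb : ZMod k)) with hJ
  have hJprop : ∀ σ : K ≃ₐ[ℚ] K,
      (m : ZMod k) * (f σ : ZMod k) + J * (a σ : ZMod k) = J := by
    intro σ
    have h1 := key σb σ
    rw [haA σb, hσb, hbc] at h1
    have hcc : ((c : (ZMod k)ˣ) : ZMod k) * ((c⁻¹ : (ZMod k)ˣ) : ZMod k) = 1 := by
      rw [← Units.val_mul, mul_inv_cancel, Units.val_one]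
    rw [hJ]
    linear_combination ((c⁻¹ : (ZMod k)ˣ) : ZMod k) * h1
      - (m : ZMod k) * (f σ : ZMod k) * hcc
  set j : ℕ := J.val with hj
  have hjJ : (j : ZMod k) = J := ZMod.natCast_rightInverse J
  set w : K := Y ^ m * ζK ^ j with hwdef
  have hwfix : ∀ σ : K ≃ₐ[ℚ] K, σ w = w := by
    intro σ
    have hz : ζK ^ (m * f σ + a σ * j) = ζK ^ j := by
      rw [hpowK]
      push_cast
      rw [hjJ]
      linear_combination hJprop σ
    calc σ w = ζK ^ (m * f σ + a σ * j) * Y ^ m := by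
          rw [hwdef, map_mul, map_pow, map_pow, hf σ, ha σ, pow_add]
          ring
      _ = ζK ^ j * Y ^ m := by rw [hz]
      _ = w := by rw [hwdef]; ring
  have hfix_bot : IntermediateField.fixedField (⊤ : Subgroup (K ≃ₐ[ℚ] K)) = ⊥ :=
    OrderIso.map_bot (IsGalois.intermediateFieldEquivSubgroup (F := ℚ) (E := ↥K)).symm
  have hwbot : w ∈ (⊥ : IntermediateField ℚ K) := by
    rw [← hfix_bot]
    intro g
    exact hwfix g
  obtain ⟨z, hz⟩ := IntermediateField.mem_bot.mp hwbot
  have hw0 : w ≠ 0 := by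
    rw [hwdef]
    exact mul_ne_zero (pow_ne_zero _ hY0) (pow_ne_zero _ hζK0)
  refine ⟨z, ?_, ?_⟩
  · rintro rfl; rw [map_zero] at hz; exact hw0 hz.symm
  · have hζKk : ζK ^ k = 1 := hζK.pow_eq_one
    have hkth : algebraMap ℚ K (z ^ k) = algebraMap ℚ K (x ^ m) := by
      rw [map_pow, hz]
      calc w ^ k = (Y ^ k) ^ m * (ζK ^ k) ^ j := by rw [hwdef]; ring
        _ = algebraMap ℚ K (x ^ m) := by
            rw [hYx, hζKk, one_pow, mul_one, ← map_pow]
    exact (algebraMap ℚ K).injective hkth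


/-- The kernel of `ℚ*/(ℚ*)^k → ℚ(ζ_k)*/(ℚ(ζ_k)*)^k` is annihilated by 2:
if a nonzero rational `x` becomes a `k`-th power in `ℚ(ζ_k)`, then `x²` is a `k`-th
power in `ℚ*`; and if `k` is odd, `x` itself is a `k`-th power in `ℚ*`. -/
theorem kernel_annihilated_by_two
    (k : ℕ) (hk : 0 < k) (ζ : ℂ) (hζ : IsPrimitiveRoot ζ k) :
    (∀ x : ℚ, x ≠ 0 →
      (∃ y : ℂ, y ∈ IntermediateField.adjoin ℚ ({ζ} : Set ℂ) ∧ y ^ k = (x : ℂ)) →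
      ∃ z : ℚ, z ≠ 0 ∧ z ^ k = x ^ 2) ∧
    (Odd k → ∀ x : ℚ, x ≠ 0 →
      (∃ y : ℂ, y ∈ IntermediateField.adjoin ℚ ({ζ} : Set ℂ) ∧ y ^ k = (x : ℂ)) →
      ∃ z : ℚ, z ≠ 0 ∧ z ^ k = x) := by
  constructor
  · intro x hx hy
    exact kernel_aux k hk ζ hζ 2 (exists_unit_sub_one_two_mul k hk) x hx hy
  · intro hodd x hx hy
    simpa using kernel_aux k hk ζ hζ 1 (exists_unit_sub_one_unit k hk hodd) x hx hy
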